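/- Let S = S_c ⊔ S_a be an SC set with m = |S| and let (≤₁, τ : S → Fin (n+1)) be a pruned SC 2-tree on S. Then the SC Fox–Neuwirth cell FN_{(≤₁,τ)} is homeomorphic to ℝ^{m+n} (that is, its dimension is |S| + |T| − 1 where T = Fin(n+1)). -/

import Mathlib

/-- The configuration space `Conf S`: the set of injective maps (configurations)
`p : S → ℝ × ℝ`, as a subset of the product space `S → ℝ × ℝ`. -/
def Conf (S : Type*) : Set (S → ℝ × ℝ) := {p | Function.Injective p}

/-- Condition (I) on a surjection `σ`: consecutive values are distinct. -/
def CondI {S : Type*} {k : ℕ} (σ : Fin k → S) : Prop :=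
  ∀ i j : Fin k, (j : ℕ) = (i : ℕ) + 1 → σ i ≠ σ j

/-- Condition (II): no interleaving pattern `i₁ < j₁ < i₂ < j₂` with
`i₁, i₂ ∈ σ⁻¹(s)` and `j₁, j₂ ∈ σ⁻¹(s')` for `s ≠ s'`. -/
def CondII {S : Type*} {k : ℕ} (σ : Fin k → S) : Prop :=
  ¬ ∃ (s s' : S) (i₁ j₁ i₂ j₂ : Fin k),
      s ≠ s' ∧ i₁ < j₁ ∧ j₁ < i₂ ∧ i₂ < j₂ ∧
      σ i₁ = s ∧ σ i₂ = s ∧ σ j₁ = s' ∧ σ j₂ = s'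

/-- `σ ∈ D(S, N)`: a surjection `σ : {1, …, N + |S|} → S` satisfying (I) and (II).
(The condition `k = N + |S|` is imposed as a separate hypothesis in the theorems.) -/
def MemD {S : Type*} {k : ℕ} (σ : Fin k → S) : Prop :=
  Function.Surjective σ ∧ CondI σ ∧ CondII σ

/-- Condition (C1) on a configuration `p`: if some element of `σ⁻¹(s)` lies strictly
between two elements of `σ⁻¹(s')` (for `s ≠ s'`) then `x_s < x_{s'}`. -/
def CondC1 {S : Type*} {k : ℕ} (σ : Fin k → S) (p : S → ℝ × ℝ) : Prop :=
  ∀ s s' : S, s ≠ s' →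
    (∃ i j₁ j₂ : Fin k, σ i = s ∧ σ j₁ = s' ∧ σ j₂ = s' ∧ j₁ < i ∧ i < j₂) →
    (p s).1 < (p s').1

/-- Condition (C2) on a configuration `p`: if `x_s = x_{s'}` (for `s ≠ s'`) and every
element of `σ⁻¹(s)` is smaller than every element of `σ⁻¹(s')` then `y_s < y_{s'}`. -/
def CondC2 {S : Type*} {k : ℕ} (σ : Fin k → S) (p : S → ℝ × ℝ) : Prop :=
  ∀ s s' : S, s ≠ s' → (p s).1 = (p s').1 →
    (∀ i j : Fin k, σ i = s → σ j = s' → i < j) →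
    (p s).2 < (p s').2

/-- Condition (C3) for an SC set `S = S_c ⊔ S_a` (here `Sa ⊆ S` and `S_c = Saᶜ`):
`x_s = 0` for `s ∈ S_a` and `x_s > 0` for `s ∈ S_c`. -/
def CondC3 {S : Type*} (Sa : Set S) (p : S → ℝ × ℝ) : Prop :=
  (∀ s ∈ Sa, (p s).1 = 0) ∧ (∀ s ∉ Sa, 0 < (p s).1)

/-- Condition (III): `σ⁻¹(s)` is a one-element set for every `s ∈ S_a`. -/
def CondIII {S : Type*} {k : ℕ} (Sa : Set S) (σ : Fin k → S) : Prop :=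
  ∀ s ∈ Sa, ∃! i : Fin k, σ i = s

/-- A pruned SC 2-tree on the SC set `S = S_c ⊔ S_a` (with `Sa ⊆ S`): a linear order
`r` and a map `τ : S → Fin (n+1)` monotone with respect to `r`, with `τ⁻¹(0) = S_a`
and `{1, …, n} ⊆ τ(S)`. -/
def IsPrunedSC2Tree {S : Type*} (Sa : Set S) {n : ℕ} (r : S → S → Prop)
    (τ : S → Fin (n + 1)) : Prop :=
  IsLinearOrder S r ∧ (∀ s s', r s s' → τ s ≤ τ s') ∧
  (∀ s, τ s = 0 ↔ s ∈ Sa) ∧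
  (∀ j : Fin (n + 1), j ≠ 0 → ∃ s, τ s = j)

/-- The Fox–Neuwirth cell of an SC 2-tree `(r, τ)`: configurations `p` with
(o) `x_s = 0` for `s ∈ S_a`, `x_s > 0` for `s ∈ S_c`; (i) `τ s < τ s'` implies
`x_s < x_{s'}`; (ii) `τ s = τ s'` and `s <₁ s'` imply `x_s = x_{s'}` and
`y_s < y_{s'}`. -/
def FNcellSC {S : Type*} (Sa : Set S) {n : ℕ} (r : S → S → Prop)
    (τ : S → Fin (n + 1)) : Set (S → ℝ × ℝ) :=
  {p | Function.Injective p ∧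
    (∀ s ∈ Sa, (p s).1 = 0) ∧ (∀ s ∉ Sa, 0 < (p s).1) ∧
    (∀ s s', τ s < τ s' → (p s).1 < (p s').1) ∧
    (∀ s s', τ s = τ s' → r s s' → s ≠ s' →
      (p s).1 = (p s').1 ∧ (p s).2 < (p s').2)}

/-- `σ ∈ D(τ, N)` for an SC 2-tree `(r, τ)`: the additional conditions (B) and (C)
(conditions (I), (II), (III) and surjectivity are imposed separately). -/
def MemDtreeSC {S : Type*} {n k : ℕ} (r : S → S → Prop) (τ : S → Fin (n + 1))
    (σ : Fin k → S) : Prop :=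
  (∀ s s' : S, s ≠ s' →
      (∃ i j₁ j₂ : Fin k, σ i = s ∧ σ j₁ = s' ∧ σ j₂ = s' ∧ j₁ < i ∧ i < j₂) →
      τ s < τ s') ∧
  (∀ s s' : S, τ s = τ s' → r s s' → s ≠ s' →
      ∀ i j : Fin k, σ i = s → σ j = s' → i < j)


/-! ### Auxiliary development for Statement 5 -/

namespace FNAux

open Finset

open scoped Classical

noncomputable section

variable {S : Type*} [Fintype S] [LinearOrder S] {n : ℕ}

/-- The level of `s`: elements with the same `τ`-value. -/
def lvl (τ : S → Fin (n + 1)) (s : S) : Finset S := univ.filter (fun s' => τ s' = τ s)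

/-- The minimum of the level of `s`. -/
def mu (τ : S → Fin (n + 1)) (s : S) : S := (lvl τ s).min' ⟨s, by simp [lvl]⟩

/-- Elements of the level of `s` strictly below `s`. -/
def blw (τ : S → Fin (n + 1)) (s : S) : Finset S :=
  univ.filter (fun s' => τ s' = τ s ∧ s' < s)

/-- Predecessor of `s` within its level. -/
def prd (τ : S → Fin (n + 1)) (s : S) : S :=
  if h : (blw τ s).Nonempty then (blw τ s).max' h else s

/-- Elements of the level of `s` which are `≤ s` and not the level minimum. -/
def Bset (τ : S → Fin (n + 1)) (s : S) : Finset S :=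
  univ.filter (fun s' => τ s' = τ s ∧ s' ≤ s ∧ s' ≠ mu τ s)

variable (τ : S → Fin (n + 1))

lemma tau_mu (s : S) : τ (mu τ s) = τ s := by
  have := Finset.min'_mem (lvl τ s) ⟨s, by simp [lvl]⟩
  simpa [lvl, mu] using this

lemma mu_le {s s' : S} (h : τ s' = τ s) : mu τ s ≤ s' :=
  Finset.min'_le _ _ (by simp [lvl, h])

lemma mu_le_self (s : S) : mu τ s ≤ s := mu_le τ rfl

lemma mu_congr {s s' : S} (h : τ s = τ s') : mu τ s = mu τ s' := by
  refine le_antisymm (mu_le τ ?_) (mu_le τ ?_)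
  · rw [tau_mu τ s', ← h]
  · rw [tau_mu τ s, h]

lemma blw_nonempty {s : S} (hs : s ≠ mu τ s) : (blw τ s).Nonempty :=
  ⟨mu τ s, by
    simp only [blw, mem_filter, mem_univ, true_and]
    exact ⟨tau_mu τ s, lt_of_le_of_ne (mu_le_self τ s) (fun h => hs h.symm)⟩⟩

lemma prd_mem {s : S} (hs : s ≠ mu τ s) : prd τ s ∈ blw τ s := by
  rw [prd, dif_pos (blw_nonempty τ hs)]
  exact Finset.max'_mem _ _

lemma tau_prd {s : S} (hs : s ≠ mu τ s) : τ (prd τ s) = τ s := by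
  have := prd_mem τ hs
  simp only [blw, mem_filter] at this
  exact this.2.1

lemma prd_lt {s : S} (hs : s ≠ mu τ s) : prd τ s < s := by
  have := prd_mem τ hs
  simp only [blw, mem_filter] at this
  exact this.2.2

lemma le_prd {s s' : S} (hs : s ≠ mu τ s) (h1 : τ s' = τ s) (h2 : s' < s) :
    s' ≤ prd τ s := by
  rw [prd, dif_pos (blw_nonempty τ hs)]
  exact Finset.le_max' _ _ (by simp only [blw, mem_filter, mem_univ, true_and]; exact ⟨h1, h2⟩)

lemma Bset_empty {s : S} (hs : s = mu τ s) : Bset τ s = ∅ := by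
  ext s'
  simp only [Bset, mem_filter, mem_univ, true_and, Finset.notMem_empty, iff_false, not_and]
  intro h1 h2
  exact fun h3 => absurd (le_antisymm (by rw [← hs]; exact h2) (mu_le τ h1)) h3

lemma not_mem_Bset_prd {s : S} (hs : s ≠ mu τ s) : s ∉ Bset τ (prd τ s) := by
  simp only [Bset, mem_filter, mem_univ, true_and]
  rintro ⟨-, h2, -⟩
  exact absurd (h2.trans_lt (prd_lt τ hs)) (lt_irrefl s)

lemma Bset_insert {s : S} (hs : s ≠ mu τ s) :
    Bset τ s = insert s (Bset τ (prd τ s)) := by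
  have hτp : τ (prd τ s) = τ s := tau_prd τ hs
  have hlt : prd τ s < s := prd_lt τ hs
  have hμ : mu τ (prd τ s) = mu τ s := mu_congr τ hτp
  ext s'
  simp only [Bset, mem_filter, mem_univ, true_and, mem_insert, hτp, hμ]
  constructor
  · rintro ⟨h1, h2, h3⟩
    rcases eq_or_lt_of_le h2 with h | h
    · exact Or.inl h
    · exact Or.inr ⟨h1, le_prd τ hs h1 h, h3⟩
  · rintro (rfl | ⟨h1, h2, h3⟩)
    · exact ⟨rfl, le_refl s', hs⟩
    · exact ⟨h1, h2.trans hlt.le, h3⟩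

/-- The `y`-coordinate map built from the parameters `v`. -/
def Yfun (v : S → ℝ) (s : S) : ℝ := v (mu τ s) + ∑ s' ∈ Bset τ s, Real.exp (v s')

/-- Extension of `u : Fin n → ℝ` to `ℕ`. -/
def uext (u : Fin n → ℝ) (k : ℕ) : ℝ := if h : k < n then u ⟨k, h⟩ else 0

/-- The `x`-coordinate of level `j` built from the parameters `u`. -/
def Xfun (u : Fin n → ℝ) (j : Fin (n + 1)) : ℝ :=
  ∑ i ∈ Finset.range (j : ℕ), Real.exp (uext u i)

lemma Xfun_zero (u : Fin n → ℝ) : Xfun u (0 : Fin (n + 1)) = 0 := by simp [Xfun]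

lemma Xfun_strictMono (u : Fin n → ℝ) : StrictMono (Xfun u) := by
  intro j j' h
  have hj : (j : ℕ) < (j' : ℕ) := h
  refine Finset.sum_lt_sum_of_subset (Finset.range_subset_range.2 hj.le) (i := (j : ℕ))
    (Finset.mem_range.2 hj) (by simp) (Real.exp_pos _) ?_
  exact fun k _ _ => (Real.exp_pos _).le

lemma Xfun_succ (u : Fin n → ℝ) (i : Fin n) :
    Xfun u i.succ = Xfun u i.castSucc + Real.exp (u i) := by
  have h1 : ((i.succ : Fin (n + 1)) : ℕ) = (i : ℕ) + 1 := rfl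
  have h2 : ((i.castSucc : Fin (n + 1)) : ℕ) = (i : ℕ) := rfl
  rw [Xfun, Xfun, h1, h2, Finset.sum_range_succ]
  congr 1
  rw [uext, dif_pos i.isLt]

lemma Y_mu (v : S → ℝ) {s : S} (hs : s = mu τ s) : Yfun τ v s = v s := by
  rw [Yfun, Bset_empty τ hs, Finset.sum_empty, ← hs, add_zero]

lemma Y_step (v : S → ℝ) {s : S} (hs : s ≠ mu τ s) :
    Yfun τ v s = Yfun τ v (prd τ s) + Real.exp (v s) := by
  rw [Yfun, Yfun, Bset_insert τ hs, Finset.sum_insert (not_mem_Bset_prd τ hs),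
    mu_congr τ (tau_prd τ hs)]
  ring

lemma Y_strict (v : S → ℝ) {s s' : S} (h : τ s = τ s') (hlt : s < s') :
    Yfun τ v s < Yfun τ v s' := by
  have hμ : mu τ s = mu τ s' := mu_congr τ h
  have hs' : s' ≠ mu τ s' := by
    intro he
    have : mu τ s' ≤ s := mu_le τ h
    rw [← he] at this
    exact absurd (this.trans_lt hlt) (lt_irrefl s')
  have hsub : Bset τ s ⊆ Bset τ s' := by
    intro a ha
    simp only [Bset, mem_filter, mem_univ, true_and] at ha ⊢
    exact ⟨ha.1.trans h, ha.2.1.trans hlt.le, by rw [← hμ]; exact ha.2.2⟩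
  have hmem : s' ∈ Bset τ s' := by
    simp only [Bset, mem_filter, mem_univ, true_and]
    exact ⟨le_refl s', hs'⟩
  have hnot : s' ∉ Bset τ s := by
    simp only [Bset, mem_filter, mem_univ, true_and]
    rintro ⟨-, h2, -⟩
    exact absurd (h2.trans_lt hlt) (lt_irrefl s')
  rw [Yfun, Yfun, hμ]
  exact add_lt_add_right (Finset.sum_lt_sum_of_subset hsub hmem hnot (Real.exp_pos _)
    (fun k _ _ => (Real.exp_pos _).le)) _

/-- The forward parametrization map. -/
def Gmap (vu : (S → ℝ) × (Fin n → ℝ)) (s : S) : ℝ × ℝ :=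
  (Xfun vu.2 (τ s), Yfun τ vu.1 s)

/-- The `v`-coordinates extracted from a configuration. -/
def Fv (p : S → ℝ × ℝ) (s : S) : ℝ :=
  if s = mu τ s then (p s).2 else Real.log ((p s).2 - (p (prd τ s)).2)

/-- The common `x`-value of level `j` in a configuration. -/
def Xp (p : S → ℝ × ℝ) (j : Fin (n + 1)) : ℝ :=
  if h : ∃ s, τ s = j then (p h.choose).1 else 0

/-- The `u`-coordinates extracted from a configuration. -/
def Fu (p : S → ℝ × ℝ) (i : Fin n) : ℝ :=
  Real.log (Xp τ p i.succ - Xp τ p i.castSucc)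

/-- The inverse parametrization map. -/
def Fmap (p : S → ℝ × ℝ) : (S → ℝ) × (Fin n → ℝ) := (Fv τ p, Fu τ p)

variable {Sa : Set S}

lemma x_eq {p : S → ℝ × ℝ} (hp : p ∈ FNcellSC Sa (· ≤ ·) τ) {s s' : S}
    (h : τ s = τ s') : (p s).1 = (p s').1 := by
  rcases lt_trichotomy s s' with hl | rfl | hl
  · exact (hp.2.2.2.2 s s' h hl.le hl.ne).1
  · rfl
  · exact ((hp.2.2.2.2 s' s h.symm hl.le hl.ne).1).symm

lemma y_lt {p : S → ℝ × ℝ} (hp : p ∈ FNcellSC Sa (· ≤ ·) τ) {s s' : S}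
    (h : τ s = τ s') (hlt : s < s') : (p s).2 < (p s').2 :=
  (hp.2.2.2.2 s s' h hlt.le hlt.ne).2

lemma Xp_eq {p : S → ℝ × ℝ} (hp : p ∈ FNcellSC Sa (· ≤ ·) τ) (s : S) :
    Xp τ p (τ s) = (p s).1 := by
  have hex : ∃ s', τ s' = τ s := ⟨s, rfl⟩
  rw [Xp, dif_pos hex]
  exact x_eq τ hp hex.choose_spec

lemma Xp_zero {p : S → ℝ × ℝ} (hp : p ∈ FNcellSC Sa (· ≤ ·) τ)
    (h0 : ∀ s, τ s = 0 ↔ s ∈ Sa) : Xp τ p (0 : Fin (n + 1)) = 0 := by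
  rw [Xp]
  split
  · next h => exact hp.2.1 _ ((h0 _).1 h.choose_spec)
  · rfl

lemma Xp_lt {p : S → ℝ × ℝ} (hp : p ∈ FNcellSC Sa (· ≤ ·) τ)
    (h0 : ∀ s, τ s = 0 ↔ s ∈ Sa)
    (hsur : ∀ j : Fin (n + 1), j ≠ 0 → ∃ s, τ s = j) (i : Fin n) :
    Xp τ p i.castSucc < Xp τ p i.succ := by
  obtain ⟨s', hs'⟩ := hsur i.succ (Fin.succ_ne_zero i)
  rw [← hs', Xp_eq τ hp]
  by_cases hi : i.castSucc = (0 : Fin (n + 1))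
  · rw [hi, Xp_zero τ hp h0]
    refine hp.2.2.1 s' (fun hmem => ?_)
    rw [(h0 s').2 hmem] at hs'
    exact Fin.succ_ne_zero i hs'.symm
  · obtain ⟨s, hs⟩ := hsur i.castSucc hi
    rw [← hs, Xp_eq τ hp]
    exact hp.2.2.2.1 s s' (by rw [hs, hs']; exact Fin.castSucc_lt_succ (i := i))

lemma G_mem (h0 : ∀ s, τ s = 0 ↔ s ∈ Sa) (vu : (S → ℝ) × (Fin n → ℝ)) :
    Gmap τ vu ∈ FNcellSC Sa (· ≤ ·) τ := by
  refine ⟨?_, ?_, ?_, ?_, ?_⟩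
  · intro s s' he
    have hx : Xfun vu.2 (τ s) = Xfun vu.2 (τ s') := congrArg Prod.fst he
    have hτ : τ s = τ s' := (Xfun_strictMono vu.2).injective hx
    have hy : Yfun τ vu.1 s = Yfun τ vu.1 s' := congrArg Prod.snd he
    rcases lt_trichotomy s s' with hl | hl | hl
    · exact absurd hy (ne_of_lt (Y_strict τ _ hτ hl))
    · exact hl
    · exact absurd hy.symm (ne_of_lt (Y_strict τ _ hτ.symm hl))
  · intro s hsa
    show Xfun vu.2 (τ s) = 0
    rw [(h0 s).2 hsa, Xfun_zero]
  · intro s hsa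
    show 0 < Xfun vu.2 (τ s)
    have hτ : τ s ≠ 0 := fun h => hsa ((h0 s).1 h)
    rw [← Xfun_zero vu.2]
    exact Xfun_strictMono vu.2 (Fin.pos_of_ne_zero hτ)
  · intro s s' h
    exact Xfun_strictMono vu.2 h
  · intro s s' h hle hne
    refine ⟨by show Xfun vu.2 (τ s) = Xfun vu.2 (τ s'); rw [h], ?_⟩
    exact Y_strict τ _ h (lt_of_le_of_ne hle hne)

lemma Xp_G (hsur : ∀ j : Fin (n + 1), j ≠ 0 → ∃ s, τ s = j)
    (vu : (S → ℝ) × (Fin n → ℝ)) (j : Fin (n + 1)) :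
    Xp τ (Gmap τ vu) j = Xfun vu.2 j := by
  by_cases hj : ∃ s, τ s = j
  · rw [Xp, dif_pos hj]
    show Xfun vu.2 (τ hj.choose) = Xfun vu.2 j
    rw [hj.choose_spec]
  · rw [Xp, dif_neg hj]
    have : j = 0 := by
      by_contra h
      exact hj (hsur j h)
    rw [this, Xfun_zero]

lemma FG (hsur : ∀ j : Fin (n + 1), j ≠ 0 → ∃ s, τ s = j)
    (vu : (S → ℝ) × (Fin n → ℝ)) : Fmap τ (Gmap τ vu) = vu := by
  rw [Fmap]
  refine Prod.ext ?_ ?_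
  · funext s
    show Fv τ (Gmap τ vu) s = vu.1 s
    by_cases hs : s = mu τ s
    · rw [Fv, if_pos hs]
      show Yfun τ vu.1 s = vu.1 s
      exact Y_mu τ _ hs
    · rw [Fv, if_neg hs]
      show Real.log (Yfun τ vu.1 s - Yfun τ vu.1 (prd τ s)) = vu.1 s
      rw [Y_step τ _ hs]
      rw [show Yfun τ vu.1 (prd τ s) + Real.exp (vu.1 s) - Yfun τ vu.1 (prd τ s)
        = Real.exp (vu.1 s) by ring, Real.log_exp]
  · funext i
    show Fu τ (Gmap τ vu) i = vu.2 i
    rw [Fu, Xp_G τ hsur, Xp_G τ hsur, Xfun_succ,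
      show Xfun vu.2 i.castSucc + Real.exp (vu.2 i) - Xfun vu.2 i.castSucc
        = Real.exp (vu.2 i) by ring, Real.log_exp]

lemma X_F {p : S → ℝ × ℝ} (hp : p ∈ FNcellSC Sa (· ≤ ·) τ)
    (h0 : ∀ s, τ s = 0 ↔ s ∈ Sa)
    (hsur : ∀ j : Fin (n + 1), j ≠ 0 → ∃ s, τ s = j) (j : Fin (n + 1)) :
    Xfun (Fu τ p) j = Xp τ p j := by
  set f : ℕ → ℝ := fun k => Xp τ p ⟨min k n, Nat.lt_succ_of_le (min_le_right _ _)⟩ with hf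
  have key : ∀ i ∈ Finset.range (j : ℕ), Real.exp (uext (Fu τ p) i) = f (i + 1) - f i := by
    intro i hi
    have hin : i < n := lt_of_lt_of_le (Finset.mem_range.1 hi) (Nat.lt_succ_iff.1 j.isLt)
    have e1 : (⟨min (i + 1) n, Nat.lt_succ_of_le (min_le_right _ _)⟩ : Fin (n + 1))
        = (⟨i, hin⟩ : Fin n).succ := by
      apply Fin.ext
      show min (i + 1) n = i + 1
      omega
    have e2 : (⟨min i n, Nat.lt_succ_of_le (min_le_right _ _)⟩ : Fin (n + 1))
        = (⟨i, hin⟩ : Fin n).castSucc := by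
      apply Fin.ext
      show min i n = i
      omega
    have hpos := Xp_lt τ hp h0 hsur ⟨i, hin⟩
    rw [uext, dif_pos hin, Fu, Real.exp_log (by linarith), hf]
    simp only [e1, e2]
  rw [Xfun, Finset.sum_congr rfl key, Finset.sum_range_sub f]
  have hf0 : f 0 = 0 := by
    have : (⟨min 0 n, Nat.lt_succ_of_le (min_le_right _ _)⟩ : Fin (n + 1)) = 0 :=
      Fin.ext (by simp)
    rw [hf]
    simp only [this]
    exact Xp_zero τ hp h0
  have hfj : f (j : ℕ) = Xp τ p j := by
    have hj' : (⟨min (j : ℕ) n, Nat.lt_succ_of_le (min_le_right _ _)⟩ : Fin (n + 1)) = j :=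
      Fin.ext (by have := j.isLt; show min (j : ℕ) n = (j : ℕ); omega)
    show Xp τ p ⟨min (j : ℕ) n, Nat.lt_succ_of_le (min_le_right _ _)⟩ = Xp τ p j
    rw [hj']
  rw [hf0, hfj, sub_zero]

lemma Y_F {p : S → ℝ × ℝ} (hp : p ∈ FNcellSC Sa (· ≤ ·) τ) (s : S) :
    Yfun τ (Fv τ p) s = (p s).2 := by
  suffices H : ∀ k, ∀ s : S, (blw τ s).card ≤ k → Yfun τ (Fv τ p) s = (p s).2 from
    H _ s le_rfl
  intro k
  induction k with
  | zero =>
    intro s hcard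
    by_cases hs : s = mu τ s
    · rw [Y_mu τ _ hs, Fv, if_pos hs]
    · have := Finset.card_pos.2 (blw_nonempty τ hs)
      omega
  | succ k ih =>
    intro s hcard
    by_cases hs : s = mu τ s
    · rw [Y_mu τ _ hs, Fv, if_pos hs]
    · have hτp := tau_prd τ hs
      have hlt := prd_lt τ hs
      have hss : blw τ (prd τ s) ⊆ blw τ s := by
        intro a ha
        simp only [blw, mem_filter, mem_univ, true_and, hτp] at ha ⊢
        exact ⟨ha.1, ha.2.trans hlt⟩
      have hmem : prd τ s ∈ blw τ s := prd_mem τ hs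
      have hnot : prd τ s ∉ blw τ (prd τ s) := by
        intro hcon
        exact absurd (Finset.mem_filter.1 hcon).2.2 (lt_irrefl _)
      have hclt : (blw τ (prd τ s)).card < (blw τ s).card :=
        Finset.card_lt_card ⟨hss, fun hsub => hnot (hsub hmem)⟩
      have hcard' : (blw τ (prd τ s)).card ≤ k := by omega
      have hypos : (p (prd τ s)).2 < (p s).2 := y_lt τ hp hτp hlt
      rw [Y_step τ _ hs, ih _ hcard', Fv, if_neg hs, Real.exp_log (by linarith)]
      ring

lemma GF {p : S → ℝ × ℝ} (hp : p ∈ FNcellSC Sa (· ≤ ·) τ)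
    (h0 : ∀ s, τ s = 0 ↔ s ∈ Sa)
    (hsur : ∀ j : Fin (n + 1), j ≠ 0 → ∃ s, τ s = j) :
    Gmap τ (Fmap τ p) = p := by
  funext s
  show (Xfun (Fu τ p) (τ s), Yfun τ (Fv τ p) s) = p s
  rw [X_F τ hp h0 hsur, Xp_eq τ hp, Y_F τ hp]

lemma cont_G : Continuous (fun vu : (S → ℝ) × (Fin n → ℝ) => Gmap τ vu) := by
  apply continuous_pi
  intro s
  simp only [Gmap, Xfun, Yfun]
  apply Continuous.prodMk
  · apply continuous_finset_sum
    intro i _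
    apply Real.continuous_exp.comp
    by_cases hi : i < n
    · simp only [uext, dif_pos hi]
      exact (continuous_apply _).comp continuous_snd
    · simp only [uext, dif_neg hi]
      exact continuous_const
  · apply Continuous.add
    · exact (continuous_apply _).comp continuous_fst
    · apply continuous_finset_sum
      intro s' _
      exact Real.continuous_exp.comp ((continuous_apply _).comp continuous_fst)

lemma cont_F (h0 : ∀ s, τ s = 0 ↔ s ∈ Sa)
    (hsur : ∀ j : Fin (n + 1), j ≠ 0 → ∃ s, τ s = j) :
    Continuous (fun p : ↥(FNcellSC Sa (· ≤ ·) τ) => Fmap τ p.1) := by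
  simp only [Fmap]
  apply Continuous.prodMk
  · apply continuous_pi
    intro s
    by_cases hs : s = mu τ s
    · simp only [Fv, if_pos hs]
      exact ((continuous_apply s).comp continuous_subtype_val).snd
    · simp only [Fv, if_neg hs]
      have hc : Continuous (fun p : ↥(FNcellSC Sa (· ≤ ·) τ) =>
          ((p : S → ℝ × ℝ) s).2 - ((p : S → ℝ × ℝ) (prd τ s)).2) :=
        (((continuous_apply s).comp continuous_subtype_val).snd).sub
          (((continuous_apply (prd τ s)).comp continuous_subtype_val).snd)
      exact hc.log fun p =>
        ne_of_gt (sub_pos.2 (y_lt τ p.2 (tau_prd τ hs) (prd_lt τ hs)))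
  · apply continuous_pi
    intro i
    have hXc : ∀ j : Fin (n + 1),
        Continuous (fun p : ↥(FNcellSC Sa (· ≤ ·) τ) => Xp τ (p : S → ℝ × ℝ) j) := by
      intro j
      by_cases hj : ∃ s, τ s = j
      · simp only [Xp, dif_pos hj]
        exact ((continuous_apply _).comp continuous_subtype_val).fst
      · simp only [Xp, dif_neg hj]
        exact continuous_const
    have hc := (hXc i.succ).sub (hXc i.castSucc)
    simp only [Fu]
    exact hc.log fun p => ne_of_gt (sub_pos.2 (Xp_lt τ p.2 h0 hsur i))

/-- The main auxiliary theorem, for a linearly ordered `S`. -/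
theorem main (Sa : Set S) (h0 : ∀ s, τ s = 0 ↔ s ∈ Sa)
    (hsur : ∀ j : Fin (n + 1), j ≠ 0 → ∃ s, τ s = j) :
    Nonempty (↥(FNcellSC Sa (· ≤ ·) τ) ≃ₜ (Fin (Fintype.card S + n) → ℝ)) := by
  constructor
  have e0 : ↥(FNcellSC Sa (· ≤ ·) τ) ≃ₜ ((S → ℝ) × (Fin n → ℝ)) :=
    { toFun := fun p => Fmap τ (p : S → ℝ × ℝ)
      invFun := fun vu => ⟨Gmap τ vu, G_mem τ h0 vu⟩
      left_inv := fun p => Subtype.ext (GF τ p.2 h0 hsur)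
      right_inv := fun vu => FG τ hsur vu
      continuous_toFun := cont_F τ h0 hsur
      continuous_invFun := (cont_G τ).subtype_mk _ }
  have e1 : (S ⊕ Fin n → ℝ) ≃ₜ ((S → ℝ) × (Fin n → ℝ)) :=
    Homeomorph.sumArrowHomeomorphProdArrow
  have e2 : (S ⊕ Fin n → ℝ) ≃ₜ (Fin (Fintype.card S + n) → ℝ) :=
    Homeomorph.piCongrLeft (Y := fun _ => ℝ)
      ((Equiv.sumCongr (Fintype.equivFin S) (Equiv.refl (Fin n))).trans finSumFinEquiv)
  exact (e0.trans e1.symm).trans e2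

end

end FNAux

/-- The Fox–Neuwirth cell of a pruned SC 2-tree
`(r, τ : S → Fin (n+1))` on an SC set `S` with `m = |S|` is homeomorphic to
`ℝ^{m+n}` (its dimension is `|S| + |T| − 1`). -/
theorem statement5 {S : Type*} [Fintype S] (Sa : Set S) {n : ℕ}
    (r : S → S → Prop) (τ : S → Fin (n + 1)) (h : IsPrunedSC2Tree Sa r τ) :
    Nonempty (↥(FNcellSC Sa r τ) ≃ₜ (Fin (Fintype.card S + n) → ℝ)) := by
  obtain ⟨hlin, hmono, h0, hsur⟩ := h
  haveI := hlin
  letI : LinearOrder S :=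
    { le := r
      le_refl := fun a => refl_of r a
      le_trans := fun a b c hab hbc => _root_.trans hab hbc
      le_antisymm := fun a b hab hba => antisymm hab hba
      le_total := fun a b => total_of r a b
      toDecidableLE := fun a b => Classical.propDecidable _ }
  exact FNAux.main τ Sa h0 hsur
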